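/- arXiv:1711.00221 — 2 statements merged into one kernel-verified Lean document; each statement's English description precedes it below -/
import Mathlib

section
/- For real numbers x, x', ν and ξ > 0, the Gaussian integral ∫_ℝ exp(−λ²(x − x')²/2) · (1/√(2πξ)) exp(−(λ − ν)²/(2ξ)) dλ equals (ξ(x − x')² + 1)^{−1/2} exp(−ν²(x − x')²/(2(ξ(x − x')² + 1))). -/
open MeasureTheory Real

/-- Expected prior covariance of a squared-exponential kernel under a Gaussian `N(ν, ξ)`
over the inverted length-scale:
`∫ exp(−λ²(x−x')²/2) N(λ|ν,ξ) dλ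
  = (ξ(x−x')² + 1)^{−1/2} exp(−ν²(x−x')²/(2(ξ(x−x')² + 1)))`. -/
theorem gaussian_integral_prior_kernel (x x' ν ξ : ℝ) (hξ : 0 < ξ) :
    ∫ l : ℝ, Real.exp (-l ^ 2 * (x - x') ^ 2 / 2)
        * ((1 / Real.sqrt (2 * π * ξ)) * Real.exp (-(l - ν) ^ 2 / (2 * ξ)))
      = (ξ * (x - x') ^ 2 + 1) ^ (-(1:ℝ)/2)
        * Real.exp (-ν ^ 2 * (x - x') ^ 2 / (2 * (ξ * (x - x') ^ 2 + 1))) := by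
  set d := (x - x') ^ 2 with hd
  have hd0 : 0 ≤ d := sq_nonneg _
  have hden : 0 < ξ * d + 1 := by positivity
  set a : ℝ := (ξ * d + 1) / (2 * ξ) with ha
  have ha0 : 0 < a := by positivity
  set m : ℝ := ν / (ξ * d + 1) with hm
  set C : ℝ := 1 / Real.sqrt (2 * π * ξ) with hC
  have key : ∀ l : ℝ,
      Real.exp (-l ^ 2 * d / 2) * (C * Real.exp (-(l - ν) ^ 2 / (2 * ξ)))
        = (C * Real.exp (-ν ^ 2 * d / (2 * (ξ * d + 1)))) * Real.exp (-a * (l - m) ^ 2) := by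
    intro l
    rw [mul_left_comm, ← Real.exp_add, mul_assoc, ← Real.exp_add]
    congr 1
    rw [ha, hm]
    congr 1
    field_simp
    ring
  simp_rw [key]
  rw [integral_const_mul]
  have hint : ∫ l : ℝ, Real.exp (-a * (l - m) ^ 2) = Real.sqrt (π / a) := by
    rw [← integral_gaussian a]
    exact integral_sub_right_eq_self (fun l => Real.exp (-a * l ^ 2)) m
  rw [hint]
  have hpa : π / a = 2 * π * ξ / (ξ * d + 1) := by
    rw [ha]; field_simp
  have h2 : (0:ℝ) < 2 * π * ξ := by positivity
  have hs2 : Real.sqrt (2 * π * ξ) ≠ 0 := (Real.sqrt_pos.mpr h2).ne'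
  have hs : C * Real.sqrt (π / a) = (ξ * d + 1) ^ (-(1:ℝ)/2) := by
    rw [hpa, Real.sqrt_div' _ hden.le, show (-(1:ℝ)/2) = -(1/2 : ℝ) by norm_num,
      Real.rpow_neg hden.le, ← Real.sqrt_eq_rpow, hC]
    field_simp
  rw [mul_comm _ (Real.sqrt (π / a)), ← mul_assoc, mul_comm (Real.sqrt (π / a)) C, hs]
end

section
/- For real numbers x, x', z, z', ν and ξ > 0, the product of two Gaussian kernel factors has expected value under λ ~ N(ν, ξ): ∫_ℝ exp(−(λx − z)²/2) exp(−(λx' − z')²/2) · (1/√(2πξ)) exp(−(λ − ν)²/(2ξ)) dλ = (ξ(x² + x'²) + 1)^{−1/2} exp(−[ξ(z'x − zx')² + (xν − z)² + (x'ν − z')²] / (2(ξ(x² + x'²) + 1))). -/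
open MeasureTheory Real Complex

lemma integral_rexp_quadratic {b : ℝ} (hb : b < 0) (c d : ℝ) :
    ∫ x : ℝ, Real.exp (b * x ^ 2 + c * x + d)
      = Real.sqrt (π / -b) * Real.exp (d - c ^ 2 / (4 * b)) := by
  have hb' : (b : ℂ).re < 0 := by simpa using hb
  have h := integral_cexp_quadratic hb' (c : ℂ) (d : ℂ)
  have hL : (∫ x : ℝ, Complex.exp ((b:ℂ) * x ^ 2 + (c:ℂ) * x + (d:ℂ)))
      = ((∫ x : ℝ, Real.exp (b * x ^ 2 + c * x + d) : ℝ) : ℂ) := by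
    have he : ∀ x : ℝ, Complex.exp ((b:ℂ) * x ^ 2 + (c:ℂ) * x + (d:ℂ))
        = ((Real.exp (b * x ^ 2 + c * x + d) : ℝ) : ℂ) := by
      intro x
      rw [Complex.ofReal_exp]
      push_cast
      ring_nf
    simp_rw [he]
    exact integral_ofReal
  have hpos : (0:ℝ) ≤ π / -b := div_nonneg pi_pos.le (neg_pos.mpr hb).le
  have hR : ((π : ℂ) / -(b:ℂ)) ^ (1 / 2 : ℂ) * Complex.exp ((d:ℂ) - (c:ℂ)^2 / (4 * (b:ℂ)))
      = ((Real.sqrt (π / -b) * Real.exp (d - c ^ 2 / (4 * b)) : ℝ) : ℂ) := by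
    have h1 : ((π:ℂ) / -(b:ℂ)) = ((π / -b : ℝ) : ℂ) := by push_cast; ring
    have h2 : ((d:ℂ) - (c:ℂ)^2 / (4*(b:ℂ))) = ((d - c^2/(4*b) : ℝ) : ℂ) := by push_cast; ring
    rw [h1, h2, show ((1:ℂ)/2) = (((1:ℝ)/2 : ℝ) : ℂ) by norm_num,
      ← Complex.ofReal_cpow hpos, ← Complex.ofReal_exp, ← Complex.ofReal_mul,
      Real.sqrt_eq_rpow]
  rw [hL, hR] at h
  exact_mod_cast h

/-- Expectation of the product of two squared-exponential kernel factors under a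
Gaussian `N(ν, ξ)` over the inverted length-scale `λ`:
`∫ exp(−(λx − z)²/2) exp(−(λx' − z')²/2) N(λ|ν,ξ) dλ
 = (ξ(x² + x'²) + 1)^{−1/2}
   exp(−[ξ(z'x − zx')² + (xν − z)² + (x'ν − z')²] / (2(ξ(x² + x'²) + 1)))`. -/
theorem gaussian_integral_product_kernel (x x' z z' ν ξ : ℝ) (hξ : 0 < ξ) :
    ∫ l : ℝ, Real.exp (-(l * x - z) ^ 2 / 2) * Real.exp (-(l * x' - z') ^ 2 / 2)
        * ((1 / Real.sqrt (2 * π * ξ)) * Real.exp (-(l - ν) ^ 2 / (2 * ξ)))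
      = (ξ * (x ^ 2 + x' ^ 2) + 1) ^ (-(1:ℝ)/2)
        * Real.exp (-(ξ * (z' * x - z * x') ^ 2 + (x * ν - z) ^ 2 + (x' * ν - z') ^ 2)
            / (2 * (ξ * (x ^ 2 + x' ^ 2) + 1))) := by
  have hξ' : ξ ≠ 0 := hξ.ne'
  set b : ℝ := -((x ^ 2 + x' ^ 2) / 2 + 1 / (2 * ξ)) with hbdef
  set c : ℝ := x * z + x' * z' + ν / ξ with hcdef
  set d : ℝ := -(z ^ 2 + z' ^ 2) / 2 - ν ^ 2 / (2 * ξ) with hddef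
  have hb : b < 0 := by
    rw [hbdef]
    have : 0 < (x ^ 2 + x' ^ 2) / 2 + 1 / (2 * ξ) := by positivity
    linarith
  have hA : (0:ℝ) < ξ * (x ^ 2 + x' ^ 2) + 1 := by positivity
  have hpt : ∀ l : ℝ, Real.exp (-(l * x - z) ^ 2 / 2) * Real.exp (-(l * x' - z') ^ 2 / 2)
        * ((1 / Real.sqrt (2 * π * ξ)) * Real.exp (-(l - ν) ^ 2 / (2 * ξ)))
      = (1 / Real.sqrt (2 * π * ξ)) * Real.exp (b * l ^ 2 + c * l + d) := by
    intro l
    have : Real.exp (-(l * x - z) ^ 2 / 2) * Real.exp (-(l * x' - z') ^ 2 / 2)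
        * ((1 / Real.sqrt (2 * π * ξ)) * Real.exp (-(l - ν) ^ 2 / (2 * ξ)))
      = (1 / Real.sqrt (2 * π * ξ)) * (Real.exp (-(l * x - z) ^ 2 / 2)
          * Real.exp (-(l * x' - z') ^ 2 / 2) * Real.exp (-(l - ν) ^ 2 / (2 * ξ))) := by ring
    rw [this, ← Real.exp_add, ← Real.exp_add]
    congr 1
    rw [hbdef, hcdef, hddef]
    field_simp
    ring
  simp_rw [hpt]
  rw [integral_const_mul, integral_rexp_quadratic hb]
  have hnb : -b = (ξ * (x ^ 2 + x' ^ 2) + 1) / (2 * ξ) := by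
    rw [hbdef]; field_simp
  have hπξ : (0:ℝ) < 2 * π * ξ := by positivity
  have hsq : Real.sqrt (π / -b) = Real.sqrt (2 * π * ξ) / Real.sqrt (ξ * (x ^ 2 + x' ^ 2) + 1) := by
    rw [← Real.sqrt_div hπξ.le]
    congr 1
    rw [hnb]
    field_simp [hA.ne']
  have h4b : 4 * b = -(2 * (ξ * (x ^ 2 + x' ^ 2) + 1)) / ξ := by
    rw [hbdef]; field_simp; ring
  have hexp : d - c ^ 2 / (4 * b)
      = -(ξ * (z' * x - z * x') ^ 2 + (x * ν - z) ^ 2 + (x' * ν - z') ^ 2)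
          / (2 * (ξ * (x ^ 2 + x' ^ 2) + 1)) := by
    rw [show c ^ 2 / (4 * b) = c ^ 2 / (4 * b) by rfl, h4b, hcdef, hddef]
    rw [div_div_eq_mul_div]
    field_simp [hA.ne']
    ring
  rw [hsq, hexp]
  have h1 : (ξ * (x ^ 2 + x' ^ 2) + 1) ^ (-(1:ℝ)/2)
      = (Real.sqrt (ξ * (x ^ 2 + x' ^ 2) + 1))⁻¹ := by
    rw [show (-(1:ℝ)/2) = -(1/2 : ℝ) by norm_num, Real.rpow_neg hA.le, Real.sqrt_eq_rpow]
  rw [h1]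
  have hs : Real.sqrt (2 * π * ξ) ≠ 0 := (Real.sqrt_pos.mpr hπξ).ne'
  field_simp
end
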